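/- Under the hypotheses of the SPPS construction (P\'olya-factored $L$ with nonvanishing continuous $b_0,\dots,b_n$ and continuous $r$ on $[x_1,x_2]$), the SPPS solution $u_k(x) = b_0(x) \sum_{m=0}^\infty \frac{P_k^{(m)}(x)}{(mn+k-1)!} \lambda^m$ satisfies $L u_k = \lambda r u_k$ on $[x_1,x_2]$ for every $\lambda \in \mathbb{C}$. -/

import Mathlib

noncomputable def Dchain (b : ℕ → ℝ → ℂ) : ℕ → (ℝ → ℂ) → (ℝ → ℂ)
  | 0, y => fun x => y x / b 0 x
  | m + 1, y => fun x => deriv (Dchain b m y) x / b (m + 1) x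

/-- `Rint b x0 n f n = ∫ b_1 ∫ b_2 ⋯ ∫ b_n f` built from the inside out. -/
noncomputable def Rint (b : ℕ → ℝ → ℂ) (x0 : ℝ) (n : ℕ) (f : ℝ → ℂ) : ℕ → ℝ → ℂ
  | 0 => f
  | m + 1 => fun x => ∫ s in x0..x, b (n - m) s * Rint b x0 n f m s

/-- `𝓘_{1,k} = ∫ b_1 ⋯ ∫ b_k 1`, with `𝓘_{1,0} ≡ 1`. -/
noncomputable def I1 (b : ℕ → ℝ → ℂ) (x0 : ℝ) (k : ℕ) : ℝ → ℂ :=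
  Rint b x0 k (fun _ => 1) k

/-- `(𝓘_{1,n} ∘ (r b₀ ·))^m 𝓘_{1,k-1}`, so that the main formal power is
`P_k^{(m)} = (mn+k-1)! ⬝ formalQ … m`. -/
noncomputable def formalQ (b : ℕ → ℝ → ℂ) (r : ℝ → ℂ) (x0 : ℝ) (n k : ℕ) :
    ℕ → ℝ → ℂ
  | 0 => I1 b x0 (k - 1)
  | m + 1 => Rint b x0 n (fun x => r x * b 0 x * formalQ b r x0 n k m x) n

/- ### Auxiliary machinery for the proof -/

open MeasureTheory intervalIntegral

/-- The `j`-th "column" of the SPPS scheme: `Qf m j = D_j`-level term of power `m`. -/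
noncomputable def Qf (b : ℕ → ℝ → ℂ) (r : ℝ → ℂ) (x0 : ℝ) (n k : ℕ) : ℕ → ℕ → ℝ → ℂ
  | 0, j => if j < k then Rint b x0 (k - 1) (fun _ => 1) (k - 1 - j) else 0
  | m + 1, j => Rint b x0 n (fun x => r x * b 0 x * formalQ b r x0 n k m x) (n - j)

lemma primitive_hasDerivAt {g : ℝ → ℂ} (hg : Continuous g) (x0 x : ℝ) :
    HasDerivAt (fun y => ∫ s in x0..y, g s) (g x) x :=
  intervalIntegral.integral_hasDerivAt_right (hg.intervalIntegrable _ _)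
    (hg.stronglyMeasurableAtFilter _ _) hg.continuousAt

lemma Rint_continuous {b : ℕ → ℝ → ℂ} (hbc : ∀ m, Continuous (b m)) (x0 : ℝ) (n' : ℕ)
    {f : ℝ → ℂ} (hf : Continuous f) : ∀ j, Continuous (Rint b x0 n' f j)
  | 0 => hf
  | j + 1 => by
    have h : Continuous fun s => b (n' - j) s * Rint b x0 n' f j s :=
      (hbc _).mul (Rint_continuous hbc x0 n' hf j)
    exact continuous_iff_continuousAt.2 fun x => (primitive_hasDerivAt h x0 x).continuousAt

lemma formalQ_continuous {b : ℕ → ℝ → ℂ} {r : ℝ → ℂ} {x0 : ℝ} {n k : ℕ}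
    (hbc : ∀ m, Continuous (b m)) (hr : Continuous r) :
    ∀ m, Continuous (formalQ b r x0 n k m)
  | 0 => Rint_continuous hbc x0 (k-1) continuous_const (k-1)
  | m + 1 => Rint_continuous hbc x0 n
      ((hr.mul (hbc 0)).mul (formalQ_continuous hbc hr m)) n

lemma Qf_continuous {b : ℕ → ℝ → ℂ} {r : ℝ → ℂ} {x0 : ℝ} {n k : ℕ}
    (hbc : ∀ m, Continuous (b m)) (hr : Continuous r) :
    ∀ m j, Continuous (Qf b r x0 n k m j)
  | 0, j => by
    by_cases h : j < k <;>
      simp only [Qf, if_pos, if_neg, h, if_true, if_false]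
    · exact Rint_continuous hbc x0 (k-1) continuous_const _
    · exact continuous_const
  | m + 1, j => Rint_continuous hbc x0 n
      ((hr.mul (hbc 0)).mul (formalQ_continuous hbc hr m)) _

lemma Qf_zero_eq_formalQ {b : ℕ → ℝ → ℂ} {r : ℝ → ℂ} {x0 : ℝ} {n k : ℕ}
    (hk : 1 ≤ k) (m : ℕ) : Qf b r x0 n k m 0 = formalQ b r x0 n k m := by
  cases m with
  | zero => simp [Qf, formalQ, I1, Nat.lt_of_lt_of_le Nat.zero_lt_one hk]
  | succ m => simp [Qf, formalQ]

lemma Qf_hasDerivAt {b : ℕ → ℝ → ℂ} {r : ℝ → ℂ} {x0 : ℝ} {n k : ℕ}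
    (hbc : ∀ m, Continuous (b m)) (hr : Continuous r) {j : ℕ} (hj : j < n) (m : ℕ) (x : ℝ) :
    HasDerivAt (Qf b r x0 n k m j) (b (j+1) x * Qf b r x0 n k m (j+1) x) x := by
  cases m with
  | zero =>
    by_cases hjk : j + 1 < k
    · have h1 : j < k := by omega
      have e1 : Qf b r x0 n k 0 j = fun x => ∫ s in x0..x, b (j+1) s * Qf b r x0 n k 0 (j+1) s := by
        funext y
        simp only [Qf, if_pos h1, if_pos hjk]
        rw [show k - 1 - j = (k - 1 - (j+1)) + 1 from by omega]
        simp only [Rint]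
        rw [show (k-1) - (k - 1 - (j+1)) = j + 1 from by omega]
      have hcont : Continuous fun s => b (j+1) s * Qf b r x0 n k 0 (j+1) s :=
        (hbc _).mul (Qf_continuous hbc hr 0 (j+1))
      rw [e1]
      exact primitive_hasDerivAt hcont x0 x
    · have e2 : Qf b r x0 n k 0 (j+1) x = 0 := by
        simp [Qf, if_neg hjk]
      rw [e2, mul_zero]
      by_cases h1 : j < k
      · have e3 : Qf b r x0 n k 0 j = fun _ => (1:ℂ) := by
          funext y
          simp [Qf, if_pos h1, show k - 1 - j = 0 from by omega, Rint]
        rw [e3]; exact hasDerivAt_const x 1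
      · have e3 : Qf b r x0 n k 0 j = fun _ => (0:ℂ) := by
          funext y; simp [Qf, if_neg h1]
        rw [e3]; exact hasDerivAt_const x 0
  | succ m =>
    have e : Qf b r x0 n k (m+1) j
        = fun x => ∫ s in x0..x, b (j+1) s * Qf b r x0 n k (m+1) (j+1) s := by
      funext y
      simp only [Qf]
      rw [show n - j = (n - (j+1)) + 1 from by omega]
      simp only [Rint]
      rw [show n - (n - (j+1)) = j + 1 from by omega]
    have hcont : Continuous fun s => b (j+1) s * Qf b r x0 n k (m+1) (j+1) s :=
      (hbc _).mul (Qf_continuous hbc hr (m+1) (j+1))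
    rw [e]
    exact primitive_hasDerivAt hcont x0 x

lemma Qf_at_x0 {b : ℕ → ℝ → ℂ} {r : ℝ → ℂ} {x0 : ℝ} {n k : ℕ}
    {j : ℕ} (hj : j < n) (m : ℕ) : Qf b r x0 n k (m+1) j x0 = 0 := by
  simp only [Qf]
  rw [show n - j = (n - (j+1)) + 1 from by omega]
  simp [Rint]

lemma mem_uIoc_abs_le {x0 x s : ℝ} (hs : s ∈ Set.uIoc x0 x) : |s - x0| ≤ |x - x0| := by
  rcases le_total x0 x with h | h
  · rw [Set.uIoc_of_le h] at hs
    rw [abs_of_nonneg (by linarith [hs.1.le]), abs_of_nonneg (by linarith)]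
    linarith [hs.2]
  · rw [Set.uIoc_of_ge h] at hs
    rw [abs_of_nonpos (by linarith [hs.2]), abs_of_nonpos (by linarith)]
    linarith [hs.1]

lemma step_bound {x0 : ℝ} {h : ℝ → ℂ} {C : ℝ} {q : ℕ} {x : ℝ}
    (hb : ∀ s, |s - x0| ≤ |x - x0| → ‖h s‖ ≤ C * |s - x0| ^ q / (q.factorial)) :
    ‖∫ s in x0..x, h s‖ ≤ C * |x - x0| ^ (q + 1) / ((q+1).factorial) := by
  have hint : IntegrableOn (fun s => C * |s - x0| ^ q / (q.factorial)) (Set.uIoc x0 x) := by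
    apply Continuous.integrableOn_uIoc
    fun_prop
  calc ‖∫ s in x0..x, h s‖ = ‖∫ s in Set.uIoc x0 x, h s‖ :=
        intervalIntegral.norm_integral_eq_norm_integral_uIoc _
    _ ≤ ∫ s in Set.uIoc x0 x, C * |s - x0| ^ q / (q.factorial) := by
        refine MeasureTheory.norm_integral_le_of_norm_le hint ?_
        refine (ae_restrict_mem measurableSet_uIoc).mono fun s hs => hb s (mem_uIoc_abs_le hs)
    _ = C * |x - x0| ^ (q + 1) / ((q+1).factorial) := by
        simp_rw [div_eq_mul_inv, MeasureTheory.integral_mul_const, MeasureTheory.integral_const_mul,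
          integral_pow_abs_sub_uIoc]
        rw [Nat.factorial_succ]
        push_cast
        rw [mul_inv]
        ring

lemma Rint_bound {b : ℕ → ℝ → ℂ} (x0 : ℝ) (n' : ℕ) {f : ℝ → ℂ}
    {C M R : ℝ} (hM : 0 ≤ M)
    (hMb : ∀ i, i ≤ n' → ∀ s, |s - x0| ≤ R → ‖b i s‖ ≤ M)
    {p : ℕ} (hfb : ∀ s, |s - x0| ≤ R → ‖f s‖ ≤ C * |s - x0| ^ p / (p.factorial)) :
    ∀ j, ∀ y, |y - x0| ≤ R →
      ‖Rint b x0 n' f j y‖ ≤ C * M ^ j * |y - x0| ^ (p + j) / ((p + j).factorial) := by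
  intro j
  induction j with
  | zero => intro y hy; simpa [Rint] using hfb y hy
  | succ j ih =>
    intro y hy
    have key : ∀ s, |s - x0| ≤ |y - x0| →
        ‖b (n' - j) s * Rint b x0 n' f j s‖ ≤
          (C * M ^ (j + 1)) * |s - x0| ^ (p + j) / ((p + j).factorial) := by
      intro s hs
      have hsR : |s - x0| ≤ R := le_trans hs hy
      calc ‖b (n' - j) s * Rint b x0 n' f j s‖
          = ‖b (n' - j) s‖ * ‖Rint b x0 n' f j s‖ := norm_mul _ _
        _ ≤ M * (C * M ^ j * |s - x0| ^ (p + j) / ((p + j).factorial)) :=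
            mul_le_mul (hMb _ (by omega) s hsR) (ih s hsR) (norm_nonneg _) hM
        _ = (C * M ^ (j + 1)) * |s - x0| ^ (p + j) / ((p + j).factorial) := by ring
    have := step_bound key
    simpa [Rint, show p + (j + 1) = (p + j) + 1 by omega] using this

lemma formalQ_bound {b : ℕ → ℝ → ℂ} {r : ℝ → ℂ} {x0 : ℝ} {n k : ℕ}
    (hk : 1 ≤ k) (hkn : k ≤ n)
    {M R K : ℝ} (hM : 1 ≤ M) (hR : 1 ≤ R) (hK : 0 ≤ K)
    (hMb : ∀ i, i ≤ n → ∀ s, |s - x0| ≤ R → ‖b i s‖ ≤ M)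
    (hKb : ∀ s, |s - x0| ≤ R → ‖r s * b 0 s‖ ≤ K) :
    ∀ m, ∀ y, |y - x0| ≤ R → ‖formalQ b r x0 n k m y‖ ≤
      (M * R) ^ (k - 1) * (K * M ^ n) ^ m * |y - x0| ^ (m * n) / ((m * n).factorial) := by
  have hM0 : (0:ℝ) ≤ M := by linarith
  have hMb' : ∀ i, i ≤ k - 1 → ∀ s, |s - x0| ≤ R → ‖b i s‖ ≤ M :=
    fun i hi => hMb i (by omega)
  intro m
  induction m with
  | zero =>
    intro y hy
    have h1 : ∀ s : ℝ, |s - x0| ≤ R →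
        ‖(fun _ : ℝ => (1:ℂ)) s‖ ≤ 1 * |s - x0| ^ 0 / ((0:ℕ).factorial) := by
      intro s _; simp
    have := Rint_bound x0 (k-1) hM0 hMb' h1 (k-1) y hy
    simp only [formalQ, I1]
    calc ‖Rint b x0 (k-1) (fun _ => 1) (k-1) y‖
        ≤ 1 * M ^ (k-1) * |y - x0| ^ (0 + (k-1)) / ((0 + (k-1)).factorial) := this
      _ ≤ M ^ (k-1) * R ^ (k-1) := by
          rw [one_mul, zero_add]
          have h2 : |y - x0| ^ (k-1) ≤ R ^ (k-1) := pow_le_pow_left₀ (abs_nonneg _) hy _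
          have h3 : (1:ℝ) ≤ ((k-1).factorial : ℝ) := by
            exact_mod_cast Nat.one_le_iff_ne_zero.2 (Nat.factorial_ne_zero _)
          calc M ^ (k-1) * |y - x0| ^ (k-1) / ((k-1).factorial : ℝ)
              ≤ M ^ (k-1) * |y - x0| ^ (k-1) := by
                apply div_le_self (by positivity) h3
            _ ≤ M ^ (k-1) * R ^ (k-1) := by
                exact mul_le_mul_of_nonneg_left h2 (by positivity)
      _ = (M * R) ^ (k-1) * (K * M ^ n) ^ 0 * |y - x0| ^ (0 * n) / ((0 * n).factorial) := by
          simp [mul_pow]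
  | succ m ih =>
    intro y hy
    have hfb : ∀ s, |s - x0| ≤ R → ‖r s * b 0 s * formalQ b r x0 n k m s‖ ≤
        (K * ((M * R) ^ (k-1) * (K * M ^ n) ^ m)) * |s - x0| ^ (m * n) / ((m * n).factorial) := by
      intro s hs
      rw [norm_mul]
      calc ‖r s * b 0 s‖ * ‖formalQ b r x0 n k m s‖
          ≤ K * ((M * R) ^ (k-1) * (K * M ^ n) ^ m * |s - x0| ^ (m * n) / ((m * n).factorial)) :=
            mul_le_mul (hKb s hs) (ih s hs) (norm_nonneg _) hK
        _ = (K * ((M * R) ^ (k-1) * (K * M ^ n) ^ m)) * |s - x0| ^ (m * n) /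
              ((m * n).factorial) := by ring
    have := Rint_bound x0 n hM0 (fun i _ => hMb i (by omega)) hfb n y hy
    simp only [formalQ]
    calc ‖Rint b x0 n (fun x => r x * b 0 x * formalQ b r x0 n k m x) n y‖
        ≤ (K * ((M * R) ^ (k-1) * (K * M ^ n) ^ m)) * M ^ n * |y - x0| ^ (m * n + n) /
            ((m * n + n).factorial) := this
      _ = (M * R) ^ (k-1) * (K * M ^ n) ^ (m+1) * |y - x0| ^ ((m+1) * n) /
            (((m+1) * n).factorial) := by
          rw [show (m+1) * n = m * n + n from by ring]
          ring

lemma Qf_bound {b : ℕ → ℝ → ℂ} {r : ℝ → ℂ} {x0 : ℝ} {n k : ℕ}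
    (hn : 2 ≤ n) (hk : 1 ≤ k) (hkn : k ≤ n)
    {M R K : ℝ} (hM : 1 ≤ M) (hR : 1 ≤ R) (hK : 0 ≤ K)
    (hMb : ∀ i, i ≤ n → ∀ s, |s - x0| ≤ R → ‖b i s‖ ≤ M)
    (hKb : ∀ s, |s - x0| ≤ R → ‖r s * b 0 s‖ ≤ K) :
    ∀ m j, j ≤ n → ∀ y, |y - x0| ≤ R →
      ‖Qf b r x0 n k m j y‖ ≤
        (K * (M*R)^(k-1) * (M*R)^n + (M*R)^(k-1)) * (K * (M*R)^n + 1) ^ m / (m.factorial) := by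
  have hM0 : (0:ℝ) ≤ M := by linarith
  have hMR : (1:ℝ) ≤ M * R := by nlinarith
  intro m j hj y hy
  set C0 : ℝ := (M*R)^(k-1) with hC0
  set W : ℝ := (M*R)^n with hW
  have hC0pos : (0:ℝ) < C0 := by positivity
  have hWpos : (0:ℝ) < W := by positivity
  have hW1 : (1:ℝ) ≤ W := one_le_pow₀ hMR
  have hC01 : (1:ℝ) ≤ C0 := one_le_pow₀ hMR
  set A : ℝ := K * C0 * W + C0 with hA
  set B : ℝ := K * W + 1 with hB
  have hB1 : (1:ℝ) ≤ B := by
    have : 0 ≤ K * W := by positivity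
    simp [hB]; linarith
  cases m with
  | zero =>
    have hbase : ‖Qf b r x0 n k 0 j y‖ ≤ C0 := by
      by_cases h1 : j < k
      · have h2 : ∀ s : ℝ, |s - x0| ≤ R →
            ‖(fun _ : ℝ => (1:ℂ)) s‖ ≤ 1 * |s - x0| ^ 0 / ((0:ℕ).factorial) := by
          intro s _; simp
        have h3 := Rint_bound x0 (k-1) hM0 (fun i hi => hMb i (by omega)) h2 (k-1-j) y hy
        simp only [Qf, if_pos h1]
        calc ‖Rint b x0 (k-1) (fun _ => 1) (k-1-j) y‖
            ≤ 1 * M ^ (k-1-j) * |y - x0| ^ (0 + (k-1-j)) / ((0 + (k-1-j)).factorial) := h3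
          _ ≤ M ^ (k-1-j) * R ^ (k-1-j) := by
              rw [one_mul, zero_add]
              have hfac : (1:ℝ) ≤ ((k-1-j).factorial : ℝ) := by
                exact_mod_cast Nat.one_le_iff_ne_zero.2 (Nat.factorial_ne_zero _)
              calc M ^ (k-1-j) * |y - x0| ^ (k-1-j) / ((k-1-j).factorial : ℝ)
                  ≤ M ^ (k-1-j) * |y - x0| ^ (k-1-j) := div_le_self (by positivity) hfac
                _ ≤ M ^ (k-1-j) * R ^ (k-1-j) := by
                    gcongr
          _ = (M*R) ^ (k-1-j) := by rw [mul_pow]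
          _ ≤ C0 := pow_le_pow_right₀ hMR (by omega)
      · simp only [Qf, if_neg h1]
        simp [hC0pos.le]
    calc ‖Qf b r x0 n k 0 j y‖ ≤ C0 := hbase
      _ ≤ A * B ^ 0 / ((0:ℕ).factorial) := by
          have : 0 ≤ K * C0 * W := by positivity
          simp [hA]; linarith
  | succ m =>
    have hfb : ∀ s, |s - x0| ≤ R → ‖r s * b 0 s * formalQ b r x0 n k m s‖ ≤
        (K * (C0 * (K * M ^ n) ^ m)) * |s - x0| ^ (m * n) / ((m * n).factorial) := by
      intro s hs
      rw [norm_mul]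
      calc ‖r s * b 0 s‖ * ‖formalQ b r x0 n k m s‖
          ≤ K * (C0 * (K * M ^ n) ^ m * |s - x0| ^ (m * n) / ((m * n).factorial)) :=
            mul_le_mul (hKb s hs) (formalQ_bound hk hkn hM hR hK hMb hKb m s hs) (norm_nonneg _) hK
        _ = (K * (C0 * (K * M ^ n) ^ m)) * |s - x0| ^ (m * n) / ((m * n).factorial) := by ring
    have h3 := Rint_bound x0 n hM0 (fun i _ => hMb i (by omega)) hfb (n - j) y hy
    have hfacle : ((m+1).factorial : ℝ) ≤ ((m * n + (n - j)).factorial : ℝ) := by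
      have : (m+1).factorial ≤ (m * n + (n - j)).factorial := by
        cases m with
        | zero => simpa using Nat.one_le_iff_ne_zero.2 (Nat.factorial_ne_zero _)
        | succ m' =>
          apply Nat.factorial_le
          have h2 : (m'+1) * 2 ≤ (m'+1) * n := Nat.mul_le_mul_left _ hn
          omega
      exact_mod_cast this
    calc ‖Qf b r x0 n k (m+1) j y‖
        = ‖Rint b x0 n (fun x => r x * b 0 x * formalQ b r x0 n k m x) (n - j) y‖ := rfl
      _ ≤ (K * (C0 * (K * M ^ n) ^ m)) * M ^ (n-j) * |y - x0| ^ (m * n + (n - j)) /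
            ((m * n + (n - j)).factorial) := h3
      _ ≤ (K * (C0 * (K * M ^ n) ^ m)) * M ^ (n-j) * R ^ (m * n + (n - j)) /
            ((m * n + (n - j)).factorial) := by
          gcongr
      _ ≤ (K * (C0 * (K * M ^ n) ^ m)) * M ^ (n-j) * R ^ (m * n + (n - j)) /
            ((m+1).factorial) := by
          gcongr
      _ = (K * C0 * (K * W) ^ m * (M * R) ^ (n - j)) / ((m+1).factorial) := by
          rw [hW, hC0]
          ring
      _ ≤ A * B ^ (m+1) / ((m+1).factorial) := by
          gcongr ?_ / _
          calc K * C0 * (K * W) ^ m * (M * R) ^ (n - j)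
              ≤ K * C0 * (K * W) ^ m * W := by
                gcongr
                exact pow_le_pow_right₀ hMR (by omega)
            _ = (K * C0 * W) * (K * W) ^ m := by ring
            _ ≤ A * B ^ m := by
                have h1 : K * C0 * W ≤ A := by simp [hA]; positivity
                have h2 : (K * W) ^ m ≤ B ^ m := by
                  apply pow_le_pow_left₀ (by positivity)
                  simp [hB]
                have h3 : (0:ℝ) ≤ K * C0 * W := by positivity
                have h4 : (0:ℝ) ≤ B ^ m := by positivity
                nlinarith [pow_nonneg (show (0:ℝ) ≤ K*W by positivity) m]
            _ ≤ A * B ^ (m+1) := by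
                have h1 : B ^ m ≤ B ^ (m+1) := pow_le_pow_right₀ hB1 (by omega)
                have h2 : (0:ℝ) ≤ A := by positivity
                nlinarith

theorem spps_solution_solves
    (n k : ℕ) (hn : 2 ≤ n) (hk : 1 ≤ k) (hkn : k ≤ n) (x0 : ℝ)
    (b : ℕ → ℝ → ℂ) (r : ℝ → ℂ)
    (hbc : ∀ m, Continuous (b m)) (hb0 : ∀ m, ∀ x : ℝ, b m x ≠ 0)
    (hr : Continuous r) (lam : ℂ)
    (u : ℝ → ℂ)
    (hu : ∀ x, u x = b 0 x * ∑' m : ℕ, formalQ b r x0 n k m x * lam ^ m) :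
    ∀ x : ℝ, Dchain b n u x = lam * r x * u x := by
  classical
  -- Bounds on compact intervals around x0.
  have bounds : ∀ R : ℝ, 1 ≤ R → ∃ M K : ℝ, 1 ≤ M ∧ 0 ≤ K ∧
      (∀ i, i ≤ n → ∀ s, |s - x0| ≤ R → ‖b i s‖ ≤ M) ∧
      (∀ s, |s - x0| ≤ R → ‖r s * b 0 s‖ ≤ K) := by
    intro R hR
    have hcomp : IsCompact (Set.Icc (x0 - R) (x0 + R)) := isCompact_Icc
    have hBi : ∀ i : ℕ, ∃ Mi : ℝ, ∀ s ∈ Set.Icc (x0 - R) (x0 + R), ‖b i s‖ ≤ Mi := fun i =>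
      hcomp.exists_bound_of_continuousOn (hbc i).continuousOn
    choose Mi hMi using hBi
    obtain ⟨K0, hK0⟩ : ∃ K0 : ℝ, ∀ s ∈ Set.Icc (x0 - R) (x0 + R), ‖r s * b 0 s‖ ≤ K0 :=
      hcomp.exists_bound_of_continuousOn (hr.mul (hbc 0)).continuousOn
    have hmem : ∀ s : ℝ, |s - x0| ≤ R → s ∈ Set.Icc (x0 - R) (x0 + R) := by
      intro s hs
      have := abs_le.mp hs
      constructor <;> linarith [this.1, this.2]
    refine ⟨1 + ∑ i ∈ Finset.range (n+1), max (Mi i) 0, max K0 0, ?_, le_max_right _ _, ?_, ?_⟩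
    · have : (0:ℝ) ≤ ∑ i ∈ Finset.range (n+1), max (Mi i) 0 :=
        Finset.sum_nonneg fun i _ => le_max_right _ _
      linarith
    · intro i hi s hs
      have h1 : ‖b i s‖ ≤ Mi i := hMi i s (hmem s hs)
      have h2 : max (Mi i) 0 ≤ ∑ j ∈ Finset.range (n+1), max (Mi j) 0 :=
        Finset.single_le_sum (f := fun j => max (Mi j) 0) (fun j _ => le_max_right _ _)
          (Finset.mem_range.2 (show i < n + 1 by omega))
      calc ‖b i s‖ ≤ Mi i := h1
        _ ≤ max (Mi i) 0 := le_max_left _ _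
        _ ≤ ∑ j ∈ Finset.range (n+1), max (Mi j) 0 := h2
        _ ≤ 1 + ∑ j ∈ Finset.range (n+1), max (Mi j) 0 := by linarith
    · intro s hs
      exact le_trans (hK0 s (hmem s hs)) (le_max_left _ _)
  -- The key induction: each Dchain level is the sum of the corresponding column.
  have key : ∀ j, j ≤ n → ∀ x : ℝ,
      Dchain b j u x = ∑' m : ℕ, Qf b r x0 n k m j x * lam ^ m := by
    intro j
    induction j with
    | zero =>
      intro _ x
      simp only [Dchain]
      rw [hu x, mul_div_cancel_left₀ _ (hb0 0 x)]
      exact (tsum_congr fun m => by rw [Qf_zero_eq_formalQ hk m]).symm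
    | succ j ihj =>
      intro hj1 x
      have hj : j < n := by omega
      have hDf : Dchain b j u = fun z => ∑' m : ℕ, Qf b r x0 n k m j z * lam ^ m :=
        funext (ihj (by omega))
      -- set up bounds on a ball around x0 containing x
      set R : ℝ := |x - x0| + 1 with hRdef
      have hR1 : (1:ℝ) ≤ R := by have := abs_nonneg (x - x0); rw [hRdef]; linarith
      obtain ⟨M, K, hM1, hK0, hMb, hKb⟩ := bounds R hR1
      set A : ℝ := K * (M*R)^(k-1) * (M*R)^n + (M*R)^(k-1) with hA
      set B : ℝ := K * (M*R)^n + 1 with hB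
      set t : Set ℝ := Set.Ioo (x0 - R) (x0 + R) with ht
      have hmem : ∀ y : ℝ, y ∈ t → |y - x0| ≤ R := by
        intro y hy
        rw [ht, Set.mem_Ioo] at hy
        rw [abs_le]; constructor <;> linarith [hy.1, hy.2]
      have hx0t : x0 ∈ t := by
        rw [ht, Set.mem_Ioo]; constructor <;> linarith
      have hxt : x ∈ t := by
        rw [ht, Set.mem_Ioo]
        have := abs_le.mp (le_of_eq rfl : |x - x0| ≤ |x - x0|)
        constructor <;> [linarith [this.1]; linarith [this.2]]
      -- summable majorant
      have hsum : Summable (fun m : ℕ => M * (A * B ^ m / (m.factorial)) * ‖lam‖ ^ m) := by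
        have h1 : Summable (fun m : ℕ => (M * A) * ((B * ‖lam‖) ^ m / (m.factorial))) :=
          (Real.summable_pow_div_factorial (B * ‖lam‖)).mul_left _
        refine h1.congr fun m => ?_
        rw [mul_pow]
        ring
      have hder : HasDerivAt (fun z => ∑' m : ℕ, Qf b r x0 n k m j z * lam ^ m)
          (∑' m : ℕ, b (j+1) x * Qf b r x0 n k m (j+1) x * lam ^ m) x := by
        refine hasDerivAt_tsum_of_isPreconnected hsum isOpen_Ioo
          (isPreconnected_Ioo)
          (fun m y _ => (Qf_hasDerivAt hbc hr hj m y).mul_const (lam ^ m))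
          (fun m y hyt => ?_) hx0t ?_ hxt
        · have h1 := Qf_bound hn hk hkn hM1 hR1 hK0 hMb hKb m (j+1) (by omega) y (hmem y hyt)
          calc ‖b (j+1) y * Qf b r x0 n k m (j+1) y * lam ^ m‖
              = ‖b (j+1) y‖ * ‖Qf b r x0 n k m (j+1) y‖ * ‖lam‖ ^ m := by
                rw [norm_mul, norm_mul, norm_pow]
            _ ≤ M * (A * B ^ m / (m.factorial)) * ‖lam‖ ^ m := by
                gcongr
                exact hMb (j+1) (by omega) y (hmem y hyt)
        · apply summable_of_ne_finset_zero (s := ({0} : Finset ℕ))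
          intro m hm
          obtain ⟨m', rfl⟩ : ∃ m', m = m' + 1 := by
            rcases m with _ | m'
            · simp at hm
            · exact ⟨m', rfl⟩
          rw [Qf_at_x0 hj m', zero_mul]
      simp only [Dchain]
      rw [hDf, hder.deriv]
      rw [tsum_congr fun m => (mul_assoc (b (j+1) x) (Qf b r x0 n k m (j+1) x) (lam ^ m)),
        tsum_mul_left, mul_div_cancel_left₀ _ (hb0 (j+1) x)]
  -- Conclusion at level n.
  intro x
  rw [key n le_rfl x]
  -- summability of the column at level n
  set R : ℝ := |x - x0| + 1 with hRdef
  have hR1 : (1:ℝ) ≤ R := by have := abs_nonneg (x - x0); rw [hRdef]; linarith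
  obtain ⟨M, K, hM1, hK0, hMb, hKb⟩ := bounds R hR1
  have hxR : |x - x0| ≤ R := by rw [hRdef]; linarith
  have hsum : Summable (fun m : ℕ => Qf b r x0 n k m n x * lam ^ m) := by
    apply Summable.of_norm_bounded
      (g := fun m : ℕ => ((K * (M*R)^(k-1) * (M*R)^n + (M*R)^(k-1)) * (K * (M*R)^n + 1) ^ m /
        (m.factorial)) * ‖lam‖ ^ m)
    · have h1 : Summable (fun m : ℕ =>
          ((K * (M*R)^(k-1) * (M*R)^n + (M*R)^(k-1))) *
            (((K * (M*R)^n + 1) * ‖lam‖) ^ m / (m.factorial))) :=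
        (Real.summable_pow_div_factorial _).mul_left _
      refine h1.congr fun m => ?_
      simp only [mul_pow]
      ring
    · intro m
      rw [norm_mul, norm_pow]
      gcongr
      exact Qf_bound hn hk hkn hM1 hR1 hK0 hMb hKb m n le_rfl x hxR
  rw [Summable.tsum_eq_zero_add hsum]
  have h0 : Qf b r x0 n k 0 n x = 0 := by
    simp only [Qf]
    rw [if_neg (by omega)]
    rfl
  rw [h0, zero_mul, zero_add]
  have hterm : ∀ m : ℕ, Qf b r x0 n k (m+1) n x * lam ^ (m+1)
      = (lam * r x * b 0 x) * (formalQ b r x0 n k m x * lam ^ m) := by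
    intro m
    have : Qf b r x0 n k (m+1) n x = r x * b 0 x * formalQ b r x0 n k m x := by
      simp only [Qf, Nat.sub_self]
      rfl
    rw [this, pow_succ]
    ring
  rw [tsum_congr hterm, tsum_mul_left, hu x]
  ring
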